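/- Let a : ℕ → ℝ satisfy a n ≥ 1 for all n and let ℓ : ℕ → ℝ satisfy ℓ n > 0 for all n. Then the series Σ_{n=0}^∞ a_n ℓ_n converges if and only if the series Σ_{n=0}^∞ a_n ℓ_n (Σ_{k=0}^n ℓ_k / a_k)² converges. -/

import Mathlib

/-- For `a n ≥ 1` and `ℓ n > 0`, the series `Σ aₙ ℓₙ` converges
iff the series `Σ aₙ ℓₙ (Σ_{k ≤ n} ℓₖ/aₖ)²` converges.  (Analytic core of the
self-adjointness criterion, Theorem 4.1(i).) -/
theorem summable_iff_summable_mul_sq (a ℓ : ℕ → ℝ)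
    (ha : ∀ n, 1 ≤ a n) (hℓ : ∀ n, 0 < ℓ n) :
    Summable (fun n => a n * ℓ n) ↔
      Summable (fun n => a n * ℓ n * (∑ k ∈ Finset.range (n + 1), ℓ k / a k) ^ 2) := by
  have hapos : ∀ n, (0:ℝ) < a n := fun n => lt_of_lt_of_le one_pos (ha n)
  have hpos : ∀ n, 0 < a n * ℓ n := fun n => mul_pos (hapos n) (hℓ n)
  have hdiv : ∀ k, 0 ≤ ℓ k / a k := fun k => div_nonneg (hℓ k).le (hapos k).le
  have hSnn : ∀ n, 0 ≤ ∑ k ∈ Finset.range (n + 1), ℓ k / a k :=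
    fun n => Finset.sum_nonneg fun k _ => hdiv k
  constructor
  · intro h
    have hla : Summable (fun k => ℓ k / a k) := by
      apply Summable.of_nonneg_of_le hdiv _ h
      intro k
      calc ℓ k / a k ≤ ℓ k := by
            rw [div_le_iff₀ (hapos k)]; nlinarith [(hℓ k).le, ha k]
        _ ≤ a k * ℓ k := le_mul_of_one_le_left (hℓ k).le (ha k)
    set T := ∑' k, ℓ k / a k with hT
    apply Summable.of_nonneg_of_le
      (fun n => mul_nonneg (hpos n).le (sq_nonneg _)) _ (h.mul_right (T ^ 2))
    intro n
    have hS : ∑ k ∈ Finset.range (n + 1), ℓ k / a k ≤ T :=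
      Summable.sum_le_tsum _ (fun k _ => hdiv k) hla
    have hsq := pow_le_pow_left₀ (hSnn n) hS 2
    exact mul_le_mul_of_nonneg_left hsq (hpos n).le
  · intro h
    have hc : 0 < ℓ 0 / a 0 := div_pos (hℓ 0) (hapos 0)
    have h2 : Summable (fun n => a n * ℓ n * (ℓ 0 / a 0) ^ 2) := by
      apply Summable.of_nonneg_of_le
        (fun n => mul_nonneg (hpos n).le (sq_nonneg _)) _ h
      intro n
      have hc' : ℓ 0 / a 0 ≤ ∑ k ∈ Finset.range (n + 1), ℓ k / a k :=
        Finset.single_le_sum (f := fun k => ℓ k / a k) (fun k _ => hdiv k)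
          (Finset.mem_range.mpr (Nat.succ_pos n))
      exact mul_le_mul_of_nonneg_left (pow_le_pow_left₀ hc.le hc' 2) (hpos n).le
    have h3 := h2.div_const ((ℓ 0 / a 0) ^ 2)
    simpa [mul_div_assoc, div_self (pow_ne_zero 2 hc.ne')] using h3
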